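/- Let (p0,p1,p2) in [0,1)^3 be self-dual. Then the full joint distribution of the three connectivity indicators (A↔B, B↔C, C↔A) is the same for the triangle (edge probabilities p0 on BC, p1 on CA, p2 on AB) and for the star (edge probabilities 1-p0 on OA, 1-p1 on OB, 1-p2 on OC). That is, for every event determined by which pairs among A, B, C are connected, the two probabilities agree. -/
import Mathlib


/-- Bernoulli edge weight: probability `p` if the edge is open, `1-p` if closed. -/
def edgeWeight (p : ℝ) (x : Bool) : ℝ := if x then p else 1 - p

/-- Probability, under independent edges with parameters `p0, p1, p2`, of the
event `E` of the three edge states. -/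
def probOf (p0 p1 p2 : ℝ) (E : Bool → Bool → Bool → Bool) : ℝ :=
  ∑ a : Bool, ∑ b : Bool, ∑ c : Bool,
    (if E a b c then 1 else 0) * edgeWeight p0 a * edgeWeight p1 b * edgeWeight p2 c

/-- Triangle on `{A,B,C}`, edges `a = BC, b = CA, c = AB`: `A ↔ B`. -/
def triAB (a b c : Bool) : Bool := c || (a && b)
def triBC (a b c : Bool) : Bool := a || (b && c)
def triCA (a b c : Bool) : Bool := b || (a && c)

/-- Star on `{A,B,C,O}`, edges `a = OA, b = OB, c = OC`: `A ↔ B`. -/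
def starAB (a b _c : Bool) : Bool := a && b
def starBC (_a b c : Bool) : Bool := b && c
def starCA (a _b c : Bool) : Bool := a && c


/-- Under self-duality, the joint law of the connectivity indicators
`(A↔B, B↔C, C↔A)` is the same for the triangle (edge probabilities `p0,p1,p2`)
and for the star (edge probabilities `1-p0,1-p1,1-p2`): every event determined
by the connectivity pattern of `A,B,C` has equal probability in the two models. -/
theorem star_triangle_joint_law (p0 p1 p2 : ℝ)
    (h0 : p0 ∈ Set.Ico (0:ℝ) 1) (h1 : p1 ∈ Set.Ico (0:ℝ) 1)
    (h2 : p2 ∈ Set.Ico (0:ℝ) 1)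
    (hsd : p0 + p1 + p2 - p0 * p1 * p2 - 1 = 0)
    (f : Bool → Bool → Bool → Bool) :
    probOf p0 p1 p2 (fun a b c => f (triAB a b c) (triBC a b c) (triCA a b c))
      = probOf (1 - p0) (1 - p1) (1 - p2)
          (fun a b c => f (starAB a b c) (starBC a b c) (starCA a b c)) := by
  simp only [Bool.false_eq_true, probOf, edgeWeight, triAB, triBC, triCA, starAB, starBC, starCA,
    Fintype.sum_bool, Bool.or_true, Bool.true_or, Bool.or_false, Bool.false_or,
    Bool.and_true, Bool.true_and, Bool.and_false, Bool.false_and, if_true, if_false, reduceIte]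
  linear_combination ((if f true true true then (1:ℝ) else 0)
    - (if f false false false then (1:ℝ) else 0)) * hsd
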